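/- Let A, B partition [N]^3 and suppose both |π_XY(A)| ≤ (3/4)N² and |π_XY(B)| ≤ (3/4)N². For each z ∈ [N], defining A_Xz = {x : ∀y, (x,y,z) ∈ A}, B_Xz = {x : ∀y, (x,y,z) ∈ B}, A_Yz = {y : ∀x, (x,y,z) ∈ A}, B_Yz = {y : ∀x, (x,y,z) ∈ B}, one has |A_Xz| + |B_Xz| + |A_Yz| + |B_Yz| ≤ N. -/
import Mathlib


open Finset

lemma proj_slice_bound (N : ℕ) (S : Finset (Fin N × Fin N × Fin N)) (z : Fin N)
    (hS : ((S.image (fun p => (p.1, p.2.1))).card : ℝ) ≤ (3/4 : ℝ) * N ^ 2) :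
    (Finset.univ.filter (fun x : Fin N => ∀ y : Fin N, (x, y, z) ∈ S)).card +
    (Finset.univ.filter (fun y : Fin N => ∀ x : Fin N, (x, y, z) ∈ S)).card ≤ N := by
  set SX := Finset.univ.filter (fun x : Fin N => ∀ y : Fin N, (x, y, z) ∈ S) with hSX
  set SY := Finset.univ.filter (fun y : Fin N => ∀ x : Fin N, (x, y, z) ∈ S) with hSY
  have hsub : (SX ×ˢ (Finset.univ : Finset (Fin N))) ∪ ((Finset.univ : Finset (Fin N)) ×ˢ SY)
      ⊆ S.image (fun p => (p.1, p.2.1)) := by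
    intro p hp
    simp only [Finset.mem_union, Finset.mem_product, Finset.mem_univ, true_and, and_true,
      hSX, hSY, Finset.mem_filter] at hp
    rcases hp with h | h
    · exact Finset.mem_image.2 ⟨(p.1, p.2, z), h p.2, rfl⟩
    · exact Finset.mem_image.2 ⟨(p.1, p.2, z), h p.1, rfl⟩
  have hinter : (SX ×ˢ (Finset.univ : Finset (Fin N))) ∩ ((Finset.univ : Finset (Fin N)) ×ˢ SY)
      = SX ×ˢ SY := by
    ext p; simp [Finset.mem_product, and_comm]
  have hcard := Finset.card_union_add_card_inter (SX ×ˢ (Finset.univ : Finset (Fin N)))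
    ((Finset.univ : Finset (Fin N)) ×ˢ SY)
  rw [hinter] at hcard
  simp only [Finset.card_product, Finset.card_univ, Fintype.card_fin] at hcard
  have hle := Finset.card_le_card hsub
  have key : SX.card * N + N * SY.card ≤ (S.image (fun p => (p.1, p.2.1))).card
      + SX.card * SY.card := by omega
  -- now work in ℝ
  have a0 : (0:ℝ) ≤ (N:ℝ) - SX.card := by
    have := Finset.card_le_univ SX
    simp only [Finset.card_univ, Fintype.card_fin] at this
    have : (SX.card : ℝ) ≤ N := by exact_mod_cast this
    linarith
  have c0 : (0:ℝ) ≤ (N:ℝ) - SY.card := by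
    have := Finset.card_le_univ SY
    simp only [Finset.card_univ, Fintype.card_fin] at this
    have : (SY.card : ℝ) ≤ N := by exact_mod_cast this
    linarith
  have keyR : (SX.card : ℝ) * N + N * SY.card ≤
      ((S.image (fun p => (p.1, p.2.1))).card : ℝ) + SX.card * SY.card := by
    exact_mod_cast key
  have hprod : ((N:ℝ) - SX.card) * ((N:ℝ) - SY.card) ≥ (N:ℝ)^2 / 4 := by nlinarith
  have hsum : (SX.card : ℝ) + SY.card ≤ N := by nlinarith [sq_nonneg ((N:ℝ) - SX.card - ((N:ℝ) - SY.card))]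
  exact_mod_cast hsum

/-- If `A, B` partition `[N]³` and both XY-projections have size at most `(3/4)N²`,
then for every `z`, `|A_Xz| + |B_Xz| + |A_Yz| + |B_Yz| ≤ N`. -/
theorem slice_pure_sets_bound (N : ℕ) (hN : 0 < N)
    (A B : Finset (Fin N × Fin N × Fin N))
    (hdisj : Disjoint A B) (hcover : A ∪ B = Finset.univ)
    (hA : ((A.image (fun p => (p.1, p.2.1))).card : ℝ) ≤ (3/4 : ℝ) * N ^ 2)
    (hB : ((B.image (fun p => (p.1, p.2.1))).card : ℝ) ≤ (3/4 : ℝ) * N ^ 2)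
    (z : Fin N) :
    (Finset.univ.filter (fun x : Fin N => ∀ y : Fin N, (x, y, z) ∈ A)).card +
    (Finset.univ.filter (fun x : Fin N => ∀ y : Fin N, (x, y, z) ∈ B)).card +
    (Finset.univ.filter (fun y : Fin N => ∀ x : Fin N, (x, y, z) ∈ A)).card +
    (Finset.univ.filter (fun y : Fin N => ∀ x : Fin N, (x, y, z) ∈ B)).card ≤ N := by
  set AX := Finset.univ.filter (fun x : Fin N => ∀ y : Fin N, (x, y, z) ∈ A) with hAX
  set BX := Finset.univ.filter (fun x : Fin N => ∀ y : Fin N, (x, y, z) ∈ B) with hBX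
  set AY := Finset.univ.filter (fun y : Fin N => ∀ x : Fin N, (x, y, z) ∈ A) with hAY
  set BY := Finset.univ.filter (fun y : Fin N => ∀ x : Fin N, (x, y, z) ∈ B) with hBY
  have hmem : ∀ p : Fin N × Fin N × Fin N, p ∈ A → p ∉ B := by
    intro p hp hq
    exact (Finset.disjoint_left.1 hdisj) hp hq
  -- disjointness of AX and BX
  have hdAB : Disjoint AX BX := by
    rw [Finset.disjoint_left]
    intro x hx hx'
    simp only [hAX, hBX, Finset.mem_filter, Finset.mem_univ, true_and] at hx hx'
    exact hmem _ (hx z) (hx' z)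
  have hdCD : Disjoint AY BY := by
    rw [Finset.disjoint_left]
    intro y hy hy'
    simp only [hAY, hBY, Finset.mem_filter, Finset.mem_univ, true_and] at hy hy'
    exact hmem _ (hy z) (hy' z)
  have hab : AX.card + BX.card ≤ N := by
    have := Finset.card_le_univ (AX ∪ BX)
    rw [Finset.card_union_of_disjoint hdAB] at this
    simpa using this
  have hcd : AY.card + BY.card ≤ N := by
    have := Finset.card_le_univ (AY ∪ BY)
    rw [Finset.card_union_of_disjoint hdCD] at this
    simpa using this
  have hac : AX.card + AY.card ≤ N := proj_slice_bound N A z hA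
  have hbd : BX.card + BY.card ≤ N := proj_slice_bound N B z hB
  have had : AX.card = 0 ∨ BY.card = 0 := by
    by_contra h
    push_neg at h
    obtain ⟨x, hx⟩ := Finset.card_pos.1 (Nat.pos_of_ne_zero h.1)
    obtain ⟨y, hy⟩ := Finset.card_pos.1 (Nat.pos_of_ne_zero h.2)
    simp only [hAX, hBY, Finset.mem_filter, Finset.mem_univ, true_and] at hx hy
    exact hmem _ (hx y) (hy x)
  have hbc : BX.card = 0 ∨ AY.card = 0 := by
    by_contra h
    push_neg at h
    obtain ⟨x, hx⟩ := Finset.card_pos.1 (Nat.pos_of_ne_zero h.1)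
    obtain ⟨y, hy⟩ := Finset.card_pos.1 (Nat.pos_of_ne_zero h.2)
    simp only [hBX, hAY, Finset.mem_filter, Finset.mem_univ, true_and] at hx hy
    exact hmem _ (hy x) (hx y)
  omega
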